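/- Let G be a group and x ∈ G. Define the quandle operation on G by a * b = f_x(a b⁻¹) b where f_x(g) = x⁻¹ g x. The map (a,g) ↦ g is a quandle isomorphism from Eis(G,x) = {(a,g) ∈ x^G × G' : a = g⁻¹ x g} with operation (a,g)*(b,h) = (b⁻¹ a b, x⁻¹ g b) to the generalized Alexander quandle GAlex(G', f_x). -/

import Mathlib

/-- The underlying set of the Eisermann quandle `Eis(G,x)`:
pairs `(a,g)` with `g` in the commutator subgroup and `a = g⁻¹ x g`
(so `a` lies in the conjugacy class `x^G`). -/
def EisCarrier (G : Type*) [Group G] (x : G) : Type _ :=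
  {p : G × G // p.2 ∈ commutator G ∧ p.1 = p.2⁻¹ * x * p.2}

/-- The Eisermann quandle operation `(a,g)*(b,h) = (b⁻¹ a b, x⁻¹ g b)`. -/
def eisMul {G : Type*} [Group G] (x : G) (p q : G × G) : G × G :=
  (q.1⁻¹ * p.1 * q.1, x⁻¹ * p.2 * q.1)

/-- The generalized Alexander quandle operation `u * v = f_x(u v⁻¹) v` on `G`,
with `f_x(g) = x⁻¹ g x`. -/
def galexMul {G : Type*} [Group G] (x : G) (u v : G) : G :=
  x⁻¹ * (u * v⁻¹) * x * v

/-- The map `(a,g) ↦ g` is a quandle isomorphism from `Eis(G,x)` to `GAlex(G', f_x)`: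
the Eisermann operation is closed on the carrier, the projection is a bijection onto the
commutator subgroup, and it intertwines the Eisermann operation with the generalized
Alexander operation. -/
theorem stmt_9 {G : Type*} [Group G] (x : G) :
    (∀ p q : EisCarrier G x,
      (eisMul x p.val q.val).2 ∈ commutator G ∧
      (eisMul x p.val q.val).1
        = (eisMul x p.val q.val).2⁻¹ * x * (eisMul x p.val q.val).2) ∧
    Function.Bijective
      (fun p : EisCarrier G x => (⟨p.val.2, p.prop.1⟩ : commutator G)) ∧
    (∀ p q : EisCarrier G x,
      (eisMul x p.val q.val).2 = galexMul x p.val.2 q.val.2) := by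
  refine ⟨?_, ⟨?_, ?_⟩, ?_⟩
  · rintro ⟨⟨a, g⟩, hg, ha⟩ ⟨⟨b, h⟩, hh, hb⟩
    dsimp only at ha hb hg hh ⊢
    simp only [eisMul]
    constructor
    · have h1 : x⁻¹ * g * x ∈ commutator G :=
        Subgroup.Normal.conj_mem' (Subgroup.commutator_normal ⊤ ⊤) g hg x
      have h2 : x⁻¹ * h⁻¹ * x * h ∈ commutator G := by
        have := Subgroup.commutator_mem_commutator (Subgroup.mem_top x⁻¹)
          (Subgroup.mem_top h⁻¹)
        simpa [commutatorElement_def, mul_assoc, commutator_def] using this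
      have := mul_mem h1 h2
      have heq : x⁻¹ * g * b = (x⁻¹ * g * x) * (x⁻¹ * h⁻¹ * x * h) := by
        rw [hb]; group
      rw [heq]; exact this
    · rw [ha]; group
  · rintro ⟨⟨a, g⟩, hg, ha⟩ ⟨⟨b, h⟩, hh, hb⟩ heq
    dsimp only at ha hb heq
    simp only [Subtype.mk.injEq] at heq
    subst heq
    exact Subtype.ext (Prod.ext (ha.trans hb.symm) rfl)
  · rintro ⟨g, hg⟩
    exact ⟨⟨(g⁻¹ * x * g, g), hg, rfl⟩, rfl⟩
  · rintro ⟨⟨a, g⟩, hg, ha⟩ ⟨⟨b, h⟩, hh, hb⟩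
    dsimp only at ha hb
    simp only [eisMul, galexMul]
    rw [hb]; group
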